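/- arXiv:0910.5099 — 6 statements merged into one kernel-verified Lean document; each statement's English description precedes it below -/
import Mathlib

section
/- In the Dolev-Yao equational theory, the strand s = (enc(enc(a,k'),k), enc(a,k'), k, k', a) refines the strand s' = (enc(enc(a,k'),k), enc(a,k'), k, k'', a), where a, k, k', k'' are distinct free constants. -/
/-- Terms over the Dolev-Yao signature, with atoms of type `α`
(atoms are free constants in ground terms, and variables/holes in contexts). -/
inductive DY (α : Type) : Type
  | atom : α → DY α
  | pair : DY α → DY α → DY α
  | fst  : DY α → DY α
  | snd  : DY α → DY α
  | enc  : DY α → DY α → DY α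
  | dec  : DY α → DY α → DY α
  | inv  : DY α → DY α

/-- Substitution of terms for atoms; applying a context `C : DY (Fin n)`
to a strand `s : Fin n → DY α` is `C.bind s`. -/
def DY.bind {α β : Type} (t : DY α) (f : α → DY β) : DY β :=
  match t with
  | .atom a => f a
  | .pair t u => .pair (t.bind f) (u.bind f)
  | .fst t => .fst (t.bind f)
  | .snd t => .snd (t.bind f)
  | .enc t u => .enc (t.bind f) (u.bind f)
  | .dec t u => .dec (t.bind f) (u.bind f)
  | .inv t => .inv (t.bind f)

/-- The congruence generated by the Dolev-Yao equations
`π₁⟨x,y⟩ = x`, `π₂⟨x,y⟩ = y`, `dec(enc(x,y), y⁻¹) = x`. -/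
inductive eqDY {α : Type} : DY α → DY α → Prop
  | refl (t : DY α) : eqDY t t
  | symm {t u : DY α} : eqDY t u → eqDY u t
  | trans {t u v : DY α} : eqDY t u → eqDY u v → eqDY t v
  | pairCong {t t' u u' : DY α} : eqDY t t' → eqDY u u' →
      eqDY (.pair t u) (.pair t' u')
  | fstCong {t t' : DY α} : eqDY t t' → eqDY (.fst t) (.fst t')
  | sndCong {t t' : DY α} : eqDY t t' → eqDY (.snd t) (.snd t')
  | encCong {t t' u u' : DY α} : eqDY t t' → eqDY u u' →
      eqDY (.enc t u) (.enc t' u')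
  | decCong {t t' u u' : DY α} : eqDY t t' → eqDY u u' →
      eqDY (.dec t u) (.dec t' u')
  | invCong {t t' : DY α} : eqDY t t' → eqDY (.inv t) (.inv t')
  | fstPair (t u : DY α) : eqDY (.fst (.pair t u)) t
  | sndPair (t u : DY α) : eqDY (.snd (.pair t u)) u
  | decEnc (t u : DY α) : eqDY (.dec (.enc t u) (.inv u)) t

theorem DY.bind_bind {α β γ : Type} (t : DY α) (f : α → DY β) (g : β → DY γ) :
    (t.bind f).bind g = t.bind (fun a => (f a).bind g) := by
  induction t <;> simp [DY.bind, *]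

theorem eqDY.bind {α β : Type} {t u : DY α} (h : eqDY t u) (f : α → DY β) :
    eqDY (t.bind f) (u.bind f) := by
  induction h with
  | refl t => exact .refl _
  | symm _ ih => exact ih.symm
  | trans _ _ ih1 ih2 => exact ih1.trans ih2
  | pairCong _ _ ih1 ih2 => exact .pairCong ih1 ih2
  | fstCong _ ih => exact .fstCong ih
  | sndCong _ ih => exact .sndCong ih
  | encCong _ _ ih1 ih2 => exact .encCong ih1 ih2
  | decCong _ _ ih1 ih2 => exact .decCong ih1 ih2
  | invCong _ ih => exact .invCong ih
  | fstPair t u => exact .fstPair _ _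
  | sndPair t u => exact .sndPair _ _
  | decEnc t u => exact .decEnc _ _

/-- with distinct free constants `a, k, k', k''` (the four
elements of `Fin 4`), the strand
`s = (enc(enc(a,k'),k), enc(a,k'), k, k', a)` refines
`s' = (enc(enc(a,k'),k), enc(a,k'), k, k'', a)` in the Dolev-Yao theory:
every context-pair equality modulo `eqDY` holding on `s'` holds on `s`. -/
theorem dy_refines_example :
    ∀ C₁ C₂ : DY (Fin 5),
      eqDY (C₁.bind (![DY.enc (DY.enc (DY.atom 0) (DY.atom 2)) (DY.atom 1),
                       DY.enc (DY.atom 0) (DY.atom 2),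
                       DY.atom 1, DY.atom 3, DY.atom 0] : Fin 5 → DY (Fin 4)))
           (C₂.bind (![DY.enc (DY.enc (DY.atom 0) (DY.atom 2)) (DY.atom 1),
                       DY.enc (DY.atom 0) (DY.atom 2),
                       DY.atom 1, DY.atom 3, DY.atom 0] : Fin 5 → DY (Fin 4))) →
      eqDY (C₁.bind (![DY.enc (DY.enc (DY.atom 0) (DY.atom 2)) (DY.atom 1),
                       DY.enc (DY.atom 0) (DY.atom 2),
                       DY.atom 1, DY.atom 2, DY.atom 0] : Fin 5 → DY (Fin 4)))
           (C₂.bind (![DY.enc (DY.enc (DY.atom 0) (DY.atom 2)) (DY.atom 1),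
                       DY.enc (DY.atom 0) (DY.atom 2),
                       DY.atom 1, DY.atom 2, DY.atom 0] : Fin 5 → DY (Fin 4))) := by
  intro C₁ C₂ h
  have σ : Fin 4 → DY (Fin 4) := ![DY.atom 0, DY.atom 1, DY.atom 2, DY.atom 2]
  have key : ∀ C : DY (Fin 5),
      C.bind (![DY.enc (DY.enc (DY.atom 0) (DY.atom 2)) (DY.atom 1),
                DY.enc (DY.atom 0) (DY.atom 2),
                DY.atom 1, DY.atom 2, DY.atom 0] : Fin 5 → DY (Fin 4)) =
      (C.bind (![DY.enc (DY.enc (DY.atom 0) (DY.atom 2)) (DY.atom 1),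
                DY.enc (DY.atom 0) (DY.atom 2),
                DY.atom 1, DY.atom 3, DY.atom 0] : Fin 5 → DY (Fin 4))).bind
        ![DY.atom 0, DY.atom 1, DY.atom 2, DY.atom 2] := by
    intro C
    rw [DY.bind_bind]
    congr 1
    funext i
    fin_cases i <;> rfl
  rw [key C₁, key C₂]
  exact h.bind _
end

section
/- Under the interpretation of ground terms of the monoidal signature {+, -, 0, h_1, ..., h_n} over constants a_1,...,a_k into the free module (Z[X_1,...,X_n])^k, a context with m holes is interpreted as a Z[X_1,...,X_n]-linear map from ((Z[X_1,...,X_n])^k)^m to (Z[X_1,...,X_n])^k, and if the minus symbol '-' is not public then this linear map has all coefficients that are polynomials with non-negative integer coefficients. -/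
/-- The coefficient ring `ℤ[X₁,…,Xₙ]`. -/
abbrev PolyR (n : ℕ) := MvPolynomial (Fin n) ℤ

/-- The free module `(ℤ[X₁,…,Xₙ])^k` interpreting ground terms. -/
abbrev MonMod (n k : ℕ) := Fin k → PolyR n

/-- Contexts over the monoidal signature `{+, -, 0, h₁, …, hₙ}` with `m`
holes (nullary symbols of a context are the public constant `0` and the
holes). -/
inductive MCtx (n m : ℕ) : Type
  | hole : Fin m → MCtx n m
  | zero : MCtx n m
  | add : MCtx n m → MCtx n m → MCtx n m
  | neg : MCtx n m → MCtx n m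
  | hom : Fin n → MCtx n m → MCtx n m

/-- Interpretation of a context as a map `((ℤ[X])^k)^m → (ℤ[X])^k`:
`hᵢ` acts as multiplication by `Xᵢ`. -/
noncomputable def MCtx.interp {n m : ℕ} (k : ℕ) : MCtx n m → (Fin m → MonMod n k) → MonMod n k
  | .hole i, v => v i
  | .zero, _ => 0
  | .add t u, v => t.interp k v + u.interp k v
  | .neg t, v => -(t.interp k v)
  | .hom i t, v => (MvPolynomial.X i : PolyR n) • t.interp k v

/-- A context does not use the minus symbol. -/
def MCtx.NoNeg {n m : ℕ} : MCtx n m → Prop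
  | .hole _ => True
  | .zero => True
  | .add t u => t.NoNeg ∧ u.NoNeg
  | .neg _ => False
  | .hom _ t => t.NoNeg

/-- under the interpretation into `(ℤ[X₁,…,Xₙ])^k`, a context
with `m` holes is interpreted as a `ℤ[X₁,…,Xₙ]`-linear map from
`((ℤ[X₁,…,Xₙ])^k)^m` to `(ℤ[X₁,…,Xₙ])^k` (given by coefficients
`p i ∈ ℤ[X₁,…,Xₙ]`, one per hole), and if the minus symbol is not used then
all these coefficients are polynomials with non-negative integer
coefficients. -/
theorem context_interp_linear_and_positive
    {n m : ℕ} (k : ℕ) (C : MCtx n m) :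
    IsLinearMap (PolyR n) (fun v : Fin m → MonMod n k => C.interp k v) ∧
    ∃ p : Fin m → PolyR n,
      (∀ v : Fin m → MonMod n k, C.interp k v = ∑ i, p i • v i) ∧
      (C.NoNeg → ∀ (i : Fin m) (d : Fin n →₀ ℕ), 0 ≤ (p i).coeff d) := by
  induction C with
  | hole j =>
    refine ⟨⟨fun a b => rfl, fun c a => rfl⟩, fun i => if i = j then 1 else 0, ?_, ?_⟩
    · intro v
      simp [MCtx.interp, Finset.sum_ite_eq', ite_smul]
    · intro _ i d
      dsimp only
      split <;> simp [MvPolynomial.coeff_one]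
      split <;> simp
  | zero =>
    refine ⟨⟨fun a b => by simp [MCtx.interp], fun c a => by simp [MCtx.interp]⟩,
      0, fun v => by simp [MCtx.interp], fun _ i d => by simp⟩
  | add t u iht ihu =>
    obtain ⟨⟨ha, hs⟩, pt, hpt, hnt⟩ := iht
    obtain ⟨⟨ha', hs'⟩, pu, hpu, hnu⟩ := ihu
    refine ⟨⟨fun a b => ?_, fun c a => ?_⟩, pt + pu, fun v => ?_, fun h i d => ?_⟩
    · simp only [MCtx.interp, ha a b, ha' a b]; abel
    · simp only [MCtx.interp, hs c a, hs' c a, smul_add]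
    · simp only [MCtx.interp, hpt v, hpu v, Pi.add_apply, add_smul, Finset.sum_add_distrib]
    · simpa using add_nonneg (hnt h.1 i d) (hnu h.2 i d)
  | neg t iht =>
    obtain ⟨⟨ha, hs⟩, pt, hpt, _⟩ := iht
    refine ⟨⟨fun a b => ?_, fun c a => ?_⟩, -pt, fun v => ?_, fun h => h.elim⟩
    · simp only [MCtx.interp, ha a b]; abel
    · simp only [MCtx.interp, hs c a, smul_neg]
    · simp only [MCtx.interp, hpt v, Pi.neg_apply, neg_smul, ← Finset.sum_neg_distrib]
  | hom i t iht =>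
    obtain ⟨⟨ha, hs⟩, pt, hpt, hnt⟩ := iht
    refine ⟨⟨fun a b => ?_, fun c a => ?_⟩, fun j => MvPolynomial.X i * pt j,
      fun v => ?_, fun h j d => ?_⟩
    · simp only [MCtx.interp, ha a b, smul_add]
    · simp only [MCtx.interp, hs c a]; rw [smul_comm]
    · simp only [MCtx.interp, hpt v, Finset.smul_sum, smul_smul]
    · rw [MvPolynomial.coeff_X_mul']
      split
      · exact hnt h j _
      · rfl
end

section
/- For the monoidal deduction system interpreted into M = (Z[X_1,...,X_n])^k, let s be a positive strand of length m interpreted as a vector v ∈ M^m, and let s^* = { f linear form on M^m : f(v) = 0 } be its syzygy module. Then for a pair of contexts (C_1,C_2), C_1·s =_E C_2·s if and only if ([[C_1]] - [[C_2]])(v) = 0; consequently the map (C_1,C_2) ↦ [[C_1]] - [[C_2]] from P_s to s^* is surjective. -/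
/-- Ground terms over the monoidal signature `{+, -, 0, h₁, …, hₙ}` with
constants `a₁, …, a_k`. -/
inductive MTerm (n k : ℕ) : Type
  | const : Fin k → MTerm n k
  | zero : MTerm n k
  | add : MTerm n k → MTerm n k → MTerm n k
  | neg : MTerm n k → MTerm n k
  | hom : Fin n → MTerm n k → MTerm n k

/-- Interpretation `[[·]]` of ground terms into `(ℤ[X₁,…,Xₙ])^k`:
`[[aᵢ]] = eᵢ`, `[[hᵢ(t)]] = Xᵢ·[[t]]`, `[[t+u]] = [[t]]+[[u]]`,
`[[-t]] = -[[t]]`. -/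
noncomputable def MTerm.interp {n k : ℕ} : MTerm n k → MonMod n k
  | .const i => Pi.single i 1
  | .zero => 0
  | .add t u => t.interp + u.interp
  | .neg t => -t.interp
  | .hom i t => (MvPolynomial.X i : PolyR n) • t.interp

/-- Plugging ground terms into the holes of a context. -/
def MCtx.plug {n m k : ℕ} : MCtx n m → (Fin m → MTerm n k) → MTerm n k
  | .hole i, s => s i
  | .zero, _ => .zero
  | .add t u, s => .add (t.plug s) (u.plug s)
  | .neg t, s => .neg (t.plug s)
  | .hom i t, s => .hom i (t.plug s)

lemma MCtx.interp_plug {n m k : ℕ} (C : MCtx n m) (s : Fin m → MTerm n k) :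
    (C.plug s).interp = C.interp k (fun i => (s i).interp) := by
  induction C with
  | hole i => rfl
  | zero => rfl
  | add t u ht hu => simp [MCtx.plug, MTerm.interp, MCtx.interp, ht, hu]
  | neg t ht => simp [MCtx.plug, MTerm.interp, MCtx.interp, ht]
  | hom i t ht => simp [MCtx.plug, MTerm.interp, MCtx.interp, ht]

lemma exists_ctx_int {n m k : ℕ} (i : Fin m) (a : ℤ) :
    ∃ C : MCtx n m, ∀ w : Fin m → MonMod n k,
      C.interp k w = ((a : PolyR n)) • w i := by
  induction a using Int.induction_on with
  | zero => exact ⟨.zero, fun w => by simp [MCtx.interp]⟩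
  | succ j ih =>
    obtain ⟨C, hC⟩ := ih
    refine ⟨.add C (.hole i), fun w => ?_⟩
    simp [MCtx.interp, hC, add_smul]
  | pred j ih =>
    obtain ⟨C, hC⟩ := ih
    refine ⟨.add C (.neg (.hole i)), fun w => ?_⟩
    have h : ((-(j:ℤ) - 1 : ℤ) : PolyR n) = ((-(j:ℤ) : ℤ) : PolyR n) - 1 := by
      push_cast; ring
    simp only [MCtx.interp, hC, h, sub_smul, one_smul]
    abel

lemma exists_ctx_poly {n m k : ℕ} (i : Fin m) (q : PolyR n) :
    ∃ C : MCtx n m, ∀ w : Fin m → MonMod n k,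
      C.interp k w = q • w i := by
  induction q using MvPolynomial.induction_on with
  | C a =>
    obtain ⟨C, hC⟩ := exists_ctx_int (n := n) (m := m) (k := k) i a
    exact ⟨C, fun w => by rw [hC, eq_intCast (MvPolynomial.C : ℤ →+* PolyR n) a]⟩
  | add p q hp hq =>
    obtain ⟨C₁, hC₁⟩ := hp
    obtain ⟨C₂, hC₂⟩ := hq
    exact ⟨.add C₁ C₂, fun w => by simp [MCtx.interp, hC₁, hC₂, add_smul]⟩
  | mul_X p j hp =>
    obtain ⟨C, hC⟩ := hp
    refine ⟨.hom j C, fun w => ?_⟩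
    simp [MCtx.interp, hC, smul_smul, mul_comm]

lemma exists_ctx_sum {n m k : ℕ} (p : Fin m → PolyR n) (t : Finset (Fin m)) :
    ∃ C : MCtx n m, ∀ w : Fin m → MonMod n k,
      C.interp k w = ∑ i ∈ t, p i • w i := by
  classical
  induction t using Finset.induction_on with
  | empty => exact ⟨.zero, fun w => by simp [MCtx.interp]⟩
  | @insert a t' hi ih =>
    obtain ⟨C, hC⟩ := ih
    obtain ⟨C', hC'⟩ := exists_ctx_poly (k := k) a (p a)
    exact ⟨.add C' C, fun w => by simp [MCtx.interp, hC, hC', Finset.sum_insert hi]⟩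

/-- for the monoidal deduction system interpreted (faithfully)
into `M = (ℤ[X₁,…,Xₙ])^k`, let `s` be a positive strand of length `m`
interpreted as `v` with `v i = [[s i]]`, and consider linear forms on `M^m`
given by coefficient vectors `p : Fin m → ℤ[X]`, `p · w = ∑ i, p i • w i`.
Then `C₁·s =_E C₂·s` iff `([[C₁]] - [[C₂]])(v) = 0`; consequently the map
`(C₁,C₂) ↦ [[C₁]] - [[C₂]]` from `P_s` to the syzygy module
`s^* = {p | p · v = 0}` is surjective. -/
theorem monoidal_syzygy_surjective
    {n k m : ℕ}
    (eqE : MTerm n k → MTerm n k → Prop)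
    (hfaithful : ∀ t u : MTerm n k, eqE t u ↔ t.interp = u.interp)
    (s : Fin m → MTerm n k) :
    (∀ C₁ C₂ : MCtx n m,
      eqE (C₁.plug s) (C₂.plug s) ↔
        C₁.interp k (fun i => (s i).interp) -
          C₂.interp k (fun i => (s i).interp) = 0) ∧
    (∀ p : Fin m → PolyR n,
      (∑ i, p i • (s i).interp) = 0 →
      ∃ C₁ C₂ : MCtx n m,
        eqE (C₁.plug s) (C₂.plug s) ∧
        ∀ w : Fin m → MonMod n k,
          C₁.interp k w - C₂.interp k w = ∑ i, p i • w i) := by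
  constructor
  · intro C₁ C₂
    rw [hfaithful, MCtx.interp_plug, MCtx.interp_plug, sub_eq_zero]
  · intro p hp
    obtain ⟨C, hC⟩ := exists_ctx_sum (k := k) p Finset.univ
    refine ⟨C, .zero, ?_, fun w => by simp [MCtx.interp, hC]⟩
    rw [hfaithful, MCtx.interp_plug, MCtx.interp_plug]
    simp [MCtx.interp, hC, hp]
end

section
/- The monoidal deduction system over signature {+, -, 0, h_1,...,h_n} with constants a_1,...,a_k has the finite basis property: for every positive strand s there exists a finite set P_s^f of context pairs such that for all positive strands s' of the same length, P_s ⊆ P_{s'} if and only if P_s^f ⊆ P_{s'}. -/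
open MvPolynomial in
/-- The coefficient vector of a context. -/
noncomputable def MCtx.coeff {n m : ℕ} : MCtx n m → (Fin m → PolyR n)
  | .hole i => Pi.single i 1
  | .zero => 0
  | .add t u => t.coeff + u.coeff
  | .neg t => -t.coeff
  | .hom i t => (X i : PolyR n) • t.coeff

lemma MCtx.plug_interp {n m k : ℕ} (C : MCtx n m) (s : Fin m → MTerm n k) :
    (C.plug s).interp = ∑ i, C.coeff i • (s i).interp := by
  induction C with
  | hole i =>
      simp [MCtx.plug, MCtx.coeff, Pi.single_apply, ite_smul, Finset.sum_ite_eq]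
  | zero => simp [MCtx.plug, MCtx.coeff, MTerm.interp]
  | add t u ht hu =>
      simp [MCtx.plug, MCtx.coeff, MTerm.interp, ht, hu, add_smul,
        Finset.sum_add_distrib]
  | neg t ht =>
      simp [MCtx.plug, MCtx.coeff, MTerm.interp, ht, neg_smul]
  | hom i t ht =>
      simp [MCtx.plug, MCtx.coeff, MTerm.interp, ht, Finset.smul_sum, smul_smul]

/-- Realizable coefficient vectors form an additive subgroup. -/
noncomputable def MCtx.realizableSet (n m : ℕ) : AddSubgroup (Fin m → PolyR n) where
  carrier := {c | ∃ C : MCtx n m, C.coeff = c}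
  zero_mem' := ⟨.zero, rfl⟩
  add_mem' := by
    rintro _ _ ⟨C, rfl⟩ ⟨D, rfl⟩
    exact ⟨.add C D, rfl⟩
  neg_mem' := by
    rintro _ ⟨C, rfl⟩
    exact ⟨.neg C, rfl⟩

noncomputable def MCtx.esingle {n : ℕ} (m : ℕ) (i : Fin m) : Fin m → PolyR n :=
  Pi.single i 1

open MvPolynomial in
lemma MCtx.realize {n m : ℕ} (c : Fin m → PolyR n) :
    ∃ C : MCtx n m, C.coeff = c := by
  have key : ∀ (p : PolyR n) (i : Fin m),
      p • esingle m i ∈ realizableSet n m := by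
    intro p i
    induction p using MvPolynomial.induction_on with
    | C a =>
        have h1 : (esingle m i : Fin m → PolyR n) ∈ realizableSet n m :=
          ⟨.hole i, rfl⟩
        have he : (C a : PolyR n) • esingle m i = a • (esingle m i : Fin m → PolyR n) := by
          funext j
          simp [esingle, Pi.smul_apply, C_mul']
        rw [he]
        exact zsmul_mem h1 a
    | add p q hp hq =>
        rw [add_smul]
        exact add_mem hp hq
    | mul_X p j hp =>
        obtain ⟨Cp, hCp⟩ := hp
        refine ⟨.hom j Cp, ?_⟩
        simp [MCtx.coeff, hCp, smul_smul, mul_comm]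
  have hc : c = ∑ i, c i • esingle m i := by
    funext j
    simp [esingle, Pi.single_apply, Finset.sum_ite_eq]
  have : c ∈ realizableSet n m := by
    rw [hc]
    exact sum_mem fun i _ => key (c i) i
  exact this

/-- The syzygy linear map of a strand. -/
noncomputable def MTerm.L {n k m : ℕ} (s : Fin m → MTerm n k) :
    (Fin m → PolyR n) →ₗ[PolyR n] MonMod n k where
  toFun c := ∑ i, c i • (s i).interp
  map_add' x y := by simp [add_smul, Finset.sum_add_distrib]
  map_smul' a x := by simp [smul_smul, Finset.smul_sum]

lemma eqE_iff_ker {n k m : ℕ} (eqE : MTerm n k → MTerm n k → Prop)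
    (hfaithful : ∀ t u : MTerm n k, eqE t u ↔ t.interp = u.interp)
    (C D : MCtx n m) (s : Fin m → MTerm n k) :
    eqE (C.plug s) (D.plug s) ↔ MTerm.L s (C.coeff - D.coeff) = 0 := by
  rw [hfaithful, MCtx.plug_interp, MCtx.plug_interp, map_sub, sub_eq_zero]
  rfl

/-- the monoidal deduction system over `{+, -, 0, h₁,…,hₙ}` with
constants `a₁,…,a_k` has the finite basis property: for every positive strand
`s` there is a finite set `P_s^f` of context pairs such that for all positive
strands `s'` of the same length, `P_s ⊆ P_{s'}` iff `P_s^f ⊆ P_{s'}` (where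
`P_s` is the set of context pairs equal on `s` modulo the monoidal theory,

given by a relation `eqE` faithfully interpreted into `(ℤ[X₁,…,Xₙ])^k`). -/
theorem monoidal_finite_basis_property
    {n k m : ℕ}
    (eqE : MTerm n k → MTerm n k → Prop)
    (hfaithful : ∀ t u : MTerm n k, eqE t u ↔ t.interp = u.interp) :
    ∀ s : Fin m → MTerm n k,
      ∃ Pf : Finset (MCtx n m × MCtx n m),
        ∀ s' : Fin m → MTerm n k,
          ({p : MCtx n m × MCtx n m | eqE (p.1.plug s) (p.2.plug s)} ⊆
            {p : MCtx n m × MCtx n m | eqE (p.1.plug s') (p.2.plug s')}) ↔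
          ∀ p ∈ Pf, eqE (p.1.plug s') (p.2.plug s') := by
  intro s
  obtain ⟨T, hT⟩ := IsNoetherian.noetherian (LinearMap.ker (MTerm.L s))
  classical
  let F : (Fin m → PolyR n) → MCtx n m := fun c => (MCtx.realize c).choose
  have hF : ∀ c, (F c).coeff = c := fun c => (MCtx.realize c).choose_spec
  refine ⟨T.image (fun t => (F t, MCtx.zero)), fun s' => ?_⟩
  constructor
  · intro h p hp
    simp only [Finset.mem_image] at hp
    obtain ⟨t, htT, rfl⟩ := hp
    have ht : t ∈ LinearMap.ker (MTerm.L s) := by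
      rw [← hT]
      exact Submodule.subset_span htT
    have : eqE ((F t).plug s) (MCtx.zero.plug s) := by
      rw [eqE_iff_ker eqE hfaithful]
      simpa [hF, MCtx.coeff] using ht
    exact h this
  · intro h p hp
    simp only [Set.mem_setOf_eq] at hp ⊢
    rw [eqE_iff_ker eqE hfaithful] at hp ⊢
    have hspan : Submodule.span (PolyR n) (T : Set (Fin m → PolyR n)) ≤
        LinearMap.ker (MTerm.L s') := by
      rw [Submodule.span_le]
      intro t htT
      have := h (F t, MCtx.zero) (Finset.mem_image_of_mem _ htT)
      rw [eqE_iff_ker eqE hfaithful] at this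
      simpa [hF, MCtx.coeff] using this
    have : p.1.coeff - p.2.coeff ∈ LinearMap.ker (MTerm.L s) :=
      LinearMap.mem_ker.mpr hp
    rw [← hT] at this
    exact hspan this
end

section
/- In the algorithm-produced active frame φ_r for role r, the evaluation of φ_r on input(r) equals strand(r) modulo the equational theory E; i.e., proving by induction on the position i that each sent message C'_i[M_1,...,M_{i-1}] computed via the reachability oracle is E-equal to M_i, and each received message is bound to the corresponding input message, yields φ_r · input(r) =_E strand(r). -/
/-- A step of an active frame: either send a message built by applying a
context to the previously produced messages, or receive a message checked
against a unification system (a finite list of context-pair equations over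
the previously produced messages and the received one). -/
inductive Step (Ctx : Type) : Type
  | send : Ctx → Step Ctx
  | recv : List (Ctx × Ctx) → Step Ctx

/-- Evaluation of an active frame on a positive strand of inputs: send steps
produce the context applied to the already produced messages, receive steps
produce the next input message. -/
def evalAux {Term Ctx : Type} (apply : Ctx → List Term → Term) :
    List Term → List (Step Ctx) → List Term → List Term
  | _, [], _ => []
  | acc, .send C :: rest, inp =>
      apply C acc :: evalAux apply (acc ++ [apply C acc]) rest inp
  | _, .recv _ :: _, [] => []
  | acc, .recv _ :: rest, m :: inp => m :: evalAux apply (acc ++ [m]) rest inp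

/-- The frame accepts the input strand if all the unification systems of its
receive steps are satisfied (modulo `eqE`) by the produced messages. -/
def acceptsAux {Term Ctx : Type} (apply : Ctx → List Term → Term)
    (eqE : Term → Term → Prop) :
    List Term → List (Step Ctx) → List Term → Prop
  | _, [], inp => inp = []
  | acc, .send C :: rest, inp =>
      acceptsAux apply eqE (acc ++ [apply C acc]) rest inp
  | _, .recv _ :: _, [] => False
  | acc, .recv S :: rest, m :: inp =>
      (∀ p ∈ S, eqE (apply p.1 (acc ++ [m])) (apply p.2 (acc ++ [m]))) ∧
      acceptsAux apply eqE (acc ++ [m]) rest inp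

/-- A role specification strand: a list of messages with polarity
(`true` = sent `!`, `false` = received `?`). -/
abbrev Role (Term : Type) := List (Bool × Term)

/-- The input of a role: its received messages, in order. -/
def inputOf {Term : Type} (r : Role Term) : List Term :=
  (r.filter fun p => p.1 = false).map Prod.snd

/-- An active frame `φ` implements a role `r` if it accepts `input(r)` and
its evaluation on `input(r)` equals the strand of `r` modulo `eqE`. -/
def Implements {Term Ctx : Type} (apply : Ctx → List Term → Term)
    (eqE : Term → Term → Prop) (φ : List (Step Ctx)) (r : Role Term) : Prop :=
  acceptsAux apply eqE [] φ (inputOf r) ∧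
    List.Forall₂ eqE (evalAux apply [] φ (inputOf r)) (r.map Prod.snd)

/-- A role is executable if it admits an implementation. -/
def Executable {Term Ctx : Type} (apply : Ctx → List Term → Term)
    (eqE : Term → Term → Prop) (r : Role Term) : Prop :=
  ∃ φ : List (Step Ctx), Implements apply eqE φ r

/-- The compilation algorithm (cf. statement 5). -/
def compile {Term Ctx : Type} [Inhabited Ctx]
    (reach : List Term → Term → Option Ctx)
    (basis : List Term → List (Ctx × Ctx)) (r : Role Term) :
    List (Step Ctx) :=
  (List.range r.length).map fun i =>
    match r[i]? with
    | some (true, m) =>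
        .send ((reach ((r.map Prod.snd).take i) m).getD default)
    | some (false, _) => .recv (basis ((r.map Prod.snd).take (i + 1)))
    | none => .recv []

section Aux

variable {Term Ctx : Type} [Inhabited Ctx]

/-- Recursive reformulation of `compile`. -/
def goCompile (reach : List Term → Term → Option Ctx)
    (basis : List Term → List (Ctx × Ctx)) :
    List Term → Role Term → List (Step Ctx)
  | _, [] => []
  | pre, (true, m) :: rest =>
      .send ((reach pre m).getD default) :: goCompile reach basis (pre ++ [m]) rest
  | pre, (false, m) :: rest =>
      .recv (basis (pre ++ [m])) :: goCompile reach basis (pre ++ [m]) rest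

lemma goCompile_eq (reach : List Term → Term → Option Ctx)
    (basis : List Term → List (Ctx × Ctx)) :
    ∀ (rest : Role Term) (pre : List Term),
    ((List.range rest.length).map fun i =>
      match rest[i]? with
      | some (true, m) =>
          Step.send ((reach (pre ++ (rest.map Prod.snd).take i) m).getD default)
      | some (false, _) => .recv (basis (pre ++ (rest.map Prod.snd).take (i + 1)))
      | none => .recv []) = goCompile reach basis pre rest := by
  intro rest
  induction rest with
  | nil => intro pre; simp [goCompile]
  | cons hd tl ih =>
      intro pre
      obtain ⟨b, m⟩ := hd
      have hrange : List.range (tl.length + 1) = 0 :: (List.range tl.length).map Nat.succ :=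
        List.range_succ_eq_map (n := tl.length)
      have hmap : ∀ i : ℕ,
          (match ((b, m) :: tl)[i + 1]? with
            | some (true, m') =>
                Step.send ((reach (pre ++ (((b, m) :: tl).map Prod.snd).take (i + 1)) m').getD
                  default)
            | some (false, _) =>
                .recv (basis (pre ++ (((b, m) :: tl).map Prod.snd).take (i + 1 + 1)))
            | none => .recv []) =
          (match tl[i]? with
            | some (true, m') =>
                Step.send ((reach ((pre ++ [m]) ++ (tl.map Prod.snd).take i) m').getD default)
            | some (false, _) =>
                .recv (basis ((pre ++ [m]) ++ (tl.map Prod.snd).take (i + 1)))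
            | none => .recv []) := by
        intro i
        have h1 : ((b, m) :: tl)[i + 1]? = tl[i]? := rfl
        have h2 : ∀ k, pre ++ (((b, m) :: tl).map Prod.snd).take (k + 1)
            = (pre ++ [m]) ++ (tl.map Prod.snd).take k := by
          intro k; simp
        rw [h1]
        rcases htl : tl[i]? with _ | ⟨b', m'⟩
        · simp
        · cases b' <;> simp [h2]
      cases b <;>
      · simp only [List.length_cons, hrange, List.map_cons, List.map_map, goCompile]
        refine congrArg₂ List.cons ?_ ?_
        · simp
        · rw [← ih (pre ++ [m])]
          apply List.map_congr_left
          intro i _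
          exact hmap i

lemma compile_eq_goCompile (reach : List Term → Term → Option Ctx)
    (basis : List Term → List (Ctx × Ctx)) (r : Role Term) :
    compile reach basis r = goCompile reach basis [] r := by
  rw [← goCompile_eq reach basis r []]
  simp [compile]
  intro a _
  rcases r[a]? with _ | ⟨_ | _, m⟩ <;> rfl

lemma main_aux (apply : Ctx → List Term → Term)
    (eqE : Term → Term → Prop)
    (hequiv : Equivalence eqE)
    (hcong : ∀ (C : Ctx) (l l' : List Term),
      List.Forall₂ eqE l l' → eqE (apply C l) (apply C l'))
    (reach : List Term → Term → Option Ctx)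
    (hsound : ∀ s t C, reach s t = some C → eqE (apply C s) t)
    (hcomplete : ∀ s t, (∃ C : Ctx, eqE (apply C s) t) → (reach s t).isSome)
    (basis : List Term → List (Ctx × Ctx)) :
    ∀ (rest : Role Term) (pre acc : List Term),
    List.Forall₂ eqE acc pre →
    (∀ j (h : j < rest.length), (rest.get ⟨j, h⟩).1 = true →
      ∃ C : Ctx, eqE (apply C (pre ++ (rest.map Prod.snd).take j)) (rest.get ⟨j, h⟩).2) →
    List.Forall₂ eqE (evalAux apply acc (goCompile reach basis pre rest) (inputOf rest))
      (rest.map Prod.snd) := by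
  intro rest
  induction rest with
  | nil => intro pre acc _ _; simp [goCompile, evalAux]
  | cons hd tl ih =>
      intro pre acc hacc hexec
      obtain ⟨b, m⟩ := hd
      have htail : ∀ j (h : j < tl.length), (tl.get ⟨j, h⟩).1 = true →
          ∃ C : Ctx, eqE (apply C ((pre ++ [m]) ++ (tl.map Prod.snd).take j))
            (tl.get ⟨j, h⟩).2 := by
        intro j h hj
        have h' : j + 1 < ((b, m) :: tl).length := by simpa using Nat.succ_lt_succ h
        have := hexec (j + 1) h' (by simpa using hj)
        simpa using this
      cases b with
      | true =>
          have h0 : (0 : ℕ) < ((true, m) :: tl).length := by simp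
          have hex := hexec 0 h0 rfl
          simp only [List.get, List.map_cons, List.take_zero, List.append_nil] at hex
          have hsome : (reach pre m).isSome := hcomplete pre m hex
          obtain ⟨C, hC⟩ := Option.isSome_iff_exists.mp hsome
          have hCm : eqE (apply C pre) m := hsound pre m C hC
          have hgetD : (reach pre m).getD default = C := by rw [hC]; rfl
          have hsendE : eqE (apply C acc) m :=
            hequiv.trans (hcong C acc pre hacc) hCm
          have hinp : inputOf ((true, m) :: tl) = inputOf tl := by
            simp [inputOf]
          simp only [goCompile, hgetD, evalAux, hinp, List.map_cons]
          exact List.Forall₂.cons hsendE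
            (ih (pre ++ [m]) (acc ++ [apply C acc])
              (List.rel_append hacc (List.Forall₂.cons hsendE List.Forall₂.nil)) htail)
      | false =>
          have hinp : inputOf ((false, m) :: tl) = m :: inputOf tl := by
            simp [inputOf]
          simp only [goCompile, hinp, evalAux, List.map_cons]
          exact List.Forall₂.cons (hequiv.refl m)
            (ih (pre ++ [m]) (acc ++ [m])
              (List.rel_append hacc (List.Forall₂.cons (hequiv.refl m) List.Forall₂.nil)) htail)

end Aux

/-- for the algorithm-produced frame `φ_r`, the evaluation of
`φ_r` on `input(r)` equals `strand(r)` modulo `E`: by induction on the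
position, each sent message computed via the reachability oracle (which
succeeds since each sent message `Mᵢ` is reachable from `M₁,…,M_{i-1}`, `r`
being executable) is `E`-equal to `Mᵢ`, and each received message is bound to
the corresponding input message. -/
theorem compile_eval_eq_strand
    {Term Ctx : Type} [Inhabited Ctx]
    (apply : Ctx → List Term → Term)
    (eqE : Term → Term → Prop)
    (hequiv : Equivalence eqE)
    (hcong : ∀ (C : Ctx) (l l' : List Term),
      List.Forall₂ eqE l l' → eqE (apply C l) (apply C l'))
    (reach : List Term → Term → Option Ctx)
    (hsound : ∀ s t C, reach s t = some C → eqE (apply C s) t)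
    (hcomplete : ∀ s t, (∃ C : Ctx, eqE (apply C s) t) → (reach s t).isSome)
    (basis : List Term → List (Ctx × Ctx))
    (r : Role Term)
    (hexec : ∀ i (h : i < r.length), (r.get ⟨i, h⟩).1 = true →
      ∃ C : Ctx, eqE (apply C ((r.map Prod.snd).take i)) (r.get ⟨i, h⟩).2) :
    List.Forall₂ eqE (evalAux apply [] (compile reach basis r) (inputOf r))
      (r.map Prod.snd) := by
  rw [compile_eq_goCompile]
  apply main_aux apply eqE hequiv hcong reach hsound hcomplete basis r [] []
    List.Forall₂.nil
  intro j h hj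
  simpa using hexec j (by simpa using h) (by simpa using hj)
end

section
/- Let E be a subterm convergent theory and s a positive strand. If Eq(s) ⊆ P_{s'} for a positive strand s' of the same length, then P_s ⊆ P_{s'}. Consequently, defining P_s^f = Eq(s) (a finite set) witnesses that every subterm convergent deduction system has the finite basis property. -/
/-- for a subterm convergent theory `E` (convergence of `E` is
expressed by `hconv`: `E`-equality is joinability by `rwStar`), if
`Eq(s) ⊆ P_{s'}` then `P_s ⊆ P_{s'}`; consequently `P_s^f = Eq(s)` witnesses
the finite basis property: `P_s ⊆ P_{s'} ↔ Eq(s) ⊆ P_{s'}`.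

Setup: `CCtx k` are contexts with `k` holes; `plugT` plugs ground terms into
the holes, `plugR` plugs recipes (contexts over the strand variables
`x₁,…,xₙ`, i.e. elements of `CCtx n`) into the holes; `hole i` is the `i`-th
variable, `zeta M` is the recipe of `M ∈ sat(s)` (with `ζ_{Mᵢ} = xᵢ` for the
messages of `s`); `Eq(s)` consists of the pairs of recipe terms built from
contexts of size `≤ c_E` and arguments in `sat(s)` that are `E`-equal on `s`;
`lem6` and `lem7` are Lemmas 6 and 7 of Abadi–Cortier. -/
theorem subterm_convergent_finite_basis
    {Term : Type} {n : ℕ} {CCtx : ℕ → Type}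
    (plugT : ∀ {k : ℕ}, CCtx k → (Fin k → Term) → Term)
    (plugR : ∀ {k : ℕ}, CCtx k → (Fin k → CCtx n) → CCtx n)
    (hole : Fin n → CCtx n)
    (eqE : Term → Term → Prop) (hequiv : Equivalence eqE)
    (rwStar : Term → Term → Prop)
    (hconv : ∀ t u : Term, eqE t u ↔ ∃ T, rwStar t T ∧ rwStar u T)
    (s : Fin n → Term)
    (sat : Set Term) (hssat : ∀ i, s i ∈ sat)
    (zeta : Term → CCtx n)
    (hzeta : ∀ M ∈ sat, eqE (plugT (zeta M) s) M)
    (hzetas : ∀ i, zeta (s i) = hole i)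
    (hhole : ∀ (s' : Fin n → Term) (i : Fin n), plugT (hole i) s' = s' i)
    (hplug : ∀ {k : ℕ} (C : CCtx k) (ζ : Fin k → CCtx n) (s' : Fin n → Term),
      plugT (plugR C ζ) s' = plugT C (fun i => plugT (ζ i) s'))
    (cE : ℕ) (csize : ∀ {k : ℕ}, CCtx k → ℕ)
    (P : (Fin n → Term) → Set (CCtx n × CCtx n))
    (hP : ∀ s' : Fin n → Term,
      P s' = {p : CCtx n × CCtx n | eqE (plugT p.1 s') (plugT p.2 s')})
    (EqS : Set (CCtx n × CCtx n))
    (hEqS : EqS = {p : CCtx n × CCtx n |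
      ∃ (k l : ℕ) (C₁ : CCtx k) (C₂ : CCtx l)
        (Ms : Fin k → Term) (Ms' : Fin l → Term),
        csize C₁ ≤ cE ∧ csize C₂ ≤ cE ∧
        (∀ i, Ms i ∈ sat) ∧ (∀ i, Ms' i ∈ sat) ∧
        p.1 = plugR C₁ (fun i => zeta (Ms i)) ∧
        p.2 = plugR C₂ (fun i => zeta (Ms' i)) ∧
        eqE (plugT p.1 s) (plugT p.2 s)})
    (lem6 : ∀ s' : Fin n → Term, EqS ⊆ P s' →
      ∀ (k l : ℕ) (C₁ : CCtx k) (C₂ : CCtx l)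
        (Ms : Fin k → Term) (Ms' : Fin l → Term),
        (∀ i, Ms i ∈ sat) → (∀ i, Ms' i ∈ sat) →
        plugT C₁ Ms = plugT C₂ Ms' →
        eqE (plugT (plugR C₁ fun i => zeta (Ms i)) s')
            (plugT (plugR C₂ fun i => zeta (Ms' i)) s'))
    (lem7 : ∀ (k : ℕ) (C₁ : CCtx k) (Ms : Fin k → Term) (T : Term),
      (∀ i, Ms i ∈ sat) → rwStar (plugT C₁ Ms) T →
      ∃ (l : ℕ) (C₂ : CCtx l) (Ms' : Fin l → Term),
        (∀ i, Ms' i ∈ sat) ∧ T = plugT C₂ Ms' ∧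
        ∀ s' : Fin n → Term, EqS ⊆ P s' →
          eqE (plugT (plugR C₁ fun i => zeta (Ms i)) s')
              (plugT (plugR C₂ fun i => zeta (Ms' i)) s')) :
    ∀ s' : Fin n → Term, P s ⊆ P s' ↔ EqS ⊆ P s' := by
  intro s'
  constructor
  · intro hPs p hp
    apply hPs
    rw [hP s]
    rw [hEqS] at hp
    obtain ⟨k, l, C₁, C₂, Ms, Ms', _, _, _, _, _, _, heq⟩ := hp
    exact heq
  · intro h p hp
    rw [hP s] at hp
    rw [hP s']
    obtain ⟨T, hT1, hT2⟩ := (hconv _ _).mp hp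
    have hs1 : plugT p.1 s = plugT p.1 (fun i => s i) := rfl
    have key : ∀ ζ : CCtx n, plugT (plugR ζ (fun i => zeta (s i))) s' = plugT ζ s' := by
      intro ζ
      rw [hplug]
      congr 1
      funext i
      rw [hzetas, hhole]
    obtain ⟨l₁, D₁, N₁, hN₁, hTeq₁, heq₁⟩ :=
      lem7 n p.1 (fun i => s i) T hssat hT1
    obtain ⟨l₂, D₂, N₂, hN₂, hTeq₂, heq₂⟩ :=
      lem7 n p.2 (fun i => s i) T hssat hT2
    have h6 := lem6 s' h l₁ l₂ D₁ D₂ N₁ N₂ hN₁ hN₂ (hTeq₁ ▸ hTeq₂ ▸ rfl)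
    have e1 := heq₁ s' h
    have e2 := heq₂ s' h
    rw [key] at e1 e2
    exact hequiv.trans e1 (hequiv.trans h6 (hequiv.symm e2))
end
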